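/- Let V be a finite-dimensional complex vector space with a nondegenerate bilinear form B, and let μ, ρ ∈ End(V) satisfy: (i) B(μ u, v) + B(u, μ v) = 0, (ii) B(ρ u, v) = B(u, ρ v), (iii) [μ, ρ] = ρ, and (iv) μ is diagonalizable and ρ is nilpotent. Then for every complex number w and all α, β ∈ V, B( e^{-(w + πi)μ} e^{(w + πi)ρ} α , e^{-wμ} e^{wρ} β ) = B( e^{πiρ} α , e^{πiμ} β ). In particular the left-hand side is independent of w. -/

import Mathlib

open scoped Topology
open scoped Nat

section Aux

variable {V : Type*} [NormedAddCommGroup V] [NormedSpace ℂ V] [FiniteDimensional ℂ V]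

lemma aux_map_exp {E : Type*} [NormedAddCommGroup E] [NormedSpace ℂ E]
    (L : (V →L[ℂ] V) →ₗ[ℂ] E) (x : V →L[ℂ] V) :
    L (NormedSpace.exp x) = ∑' n : ℕ, ((n ! : ℂ))⁻¹ • L (x ^ n) := by
  rw [NormedSpace.exp_eq_tsum ℂ]
  have := ContinuousLinearMap.map_tsum (LinearMap.toContinuousLinearMap L)
    (NormedSpace.expSeries_summable' (𝕂 := ℂ) x)
  simpa using this

lemma aux_exp_add {x y : V →L[ℂ] V} (hxy : Commute x y) :
    NormedSpace.exp (x + y) = NormedSpace.exp x * NormedSpace.exp y :=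
  NormedSpace.exp_add_of_commute_of_mem_ball (𝕂 := ℂ) hxy
    ((NormedSpace.expSeries_radius_eq_top ℂ (V →L[ℂ] V)).symm ▸ edist_lt_top _ _)
    ((NormedSpace.expSeries_radius_eq_top ℂ (V →L[ℂ] V)).symm ▸ edist_lt_top _ _)

/-- Evaluation `C ↦ B (C u) v` as a linear map. -/
def auxL (B : V →ₗ[ℂ] V →ₗ[ℂ] ℂ) (u v : V) : (V →L[ℂ] V) →ₗ[ℂ] ℂ where
  toFun C := B (C u) v
  map_add' C D := by simp
  map_smul' c C := by simp

/-- Evaluation `C ↦ B u (C v)` as a linear map. -/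
def auxR (B : V →ₗ[ℂ] V →ₗ[ℂ] ℂ) (u v : V) : (V →L[ℂ] V) →ₗ[ℂ] ℂ where
  toFun C := B u (C v)
  map_add' C D := by simp
  map_smul' c C := by simp

lemma aux_adj (B : V →ₗ[ℂ] V →ₗ[ℂ] ℂ) (A A' : V →L[ℂ] V)
    (h : ∀ u v : V, B (A u) v = B u (A' v)) (u v : V) :
    B (NormedSpace.exp A u) v = B u (NormedSpace.exp A' v) := by
  have hpow : ∀ (n : ℕ) (u v : V), B ((A ^ n) u) v = B u ((A' ^ n) v) := by
    intro n
    induction n with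
    | zero => simp
    | succ n ih =>
      intro u v
      have e1 : (A ^ (n + 1)) u = A ((A ^ n) u) := by
        rw [pow_succ']; rfl
      have e2 : (A' ^ (n + 1)) v = (A' ^ n) (A' v) := by
        rw [pow_succ]; rfl
      rw [e1, e2, h, ih]
  have hL : B (NormedSpace.exp A u) v = auxL B u v (NormedSpace.exp A) := rfl
  have hR : B u (NormedSpace.exp A' v) = auxR B u v (NormedSpace.exp A') := rfl
  rw [hL, hR, aux_map_exp, aux_map_exp]
  exact tsum_congr fun n => by simp only [auxL, auxR, LinearMap.coe_mk, AddHom.coe_mk, hpow]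

lemma aux_conj (μ ρ : V →L[ℂ] V) (h3 : μ * ρ - ρ * μ = ρ) (c : ℂ) :
    NormedSpace.exp (c • μ) * ρ = Complex.exp c • (ρ * NormedSpace.exp (c • μ)) := by
  have hμρ : μ * ρ = ρ * (μ + 1) := by
    rw [mul_add, mul_one, sub_eq_iff_eq_add.mp h3, add_comm]
  have hpow : ∀ n : ℕ, μ ^ n * ρ = ρ * (μ + 1) ^ n := by
    intro n
    induction n with
    | zero => simp
    | succ n ih =>
      rw [pow_succ, mul_assoc, hμρ, ← mul_assoc, ih, mul_assoc, ← pow_succ]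
  have key : NormedSpace.exp (c • μ) * ρ = ρ * NormedSpace.exp (c • (μ + 1)) := by
    have hL : NormedSpace.exp (c • μ) * ρ
        = LinearMap.mulRight ℂ ρ (NormedSpace.exp (c • μ)) := rfl
    have hR : ρ * NormedSpace.exp (c • (μ + 1))
        = LinearMap.mulLeft ℂ ρ (NormedSpace.exp (c • (μ + 1))) := rfl
    rw [hL, hR, aux_map_exp, aux_map_exp]
    refine tsum_congr fun n => ?_
    simp only [LinearMap.mulRight_apply, LinearMap.mulLeft_apply, smul_pow,
      smul_mul_assoc, mul_smul_comm, hpow]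
  have hone : NormedSpace.exp (c • (1 : V →L[ℂ] V)) = Complex.exp c • 1 := by
    rw [← Algebra.algebraMap_eq_smul_one, ← NormedSpace.algebraMap_exp_comm,
      Algebra.algebraMap_eq_smul_one, ← Complex.exp_eq_exp_ℂ]
  have hsplit : NormedSpace.exp (c • (μ + 1))
      = NormedSpace.exp (c • μ) * NormedSpace.exp (c • (1 : V →L[ℂ] V)) := by
    rw [smul_add, aux_exp_add]
    exact ((Commute.one_right μ).smul_left c).smul_right c
  rw [key, hsplit, hone, mul_smul_comm, mul_one, mul_smul_comm]

lemma aux_conj_pow (μ ρ : V →L[ℂ] V) (h3 : μ * ρ - ρ * μ = ρ) (c : ℂ) :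
    ∀ n : ℕ, NormedSpace.exp (c • μ) * ρ ^ n
      = (Complex.exp c) ^ n • (ρ ^ n * NormedSpace.exp (c • μ)) := by
  intro n
  induction n with
  | zero => simp
  | succ n ih =>
    rw [pow_succ, ← mul_assoc, ih, smul_mul_assoc, mul_assoc, aux_conj μ ρ h3 c,
      mul_smul_comm, smul_smul, ← mul_assoc, ← pow_succ, pow_succ]

lemma aux_comm_exp (μ ρ : V →L[ℂ] V) (h3 : μ * ρ - ρ * μ = ρ) (c s : ℂ) :
    NormedSpace.exp (c • μ) * NormedSpace.exp (s • ρ)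
      = NormedSpace.exp ((Complex.exp c * s) • ρ) * NormedSpace.exp (c • μ) := by
  have hL : NormedSpace.exp (c • μ) * NormedSpace.exp (s • ρ)
      = LinearMap.mulLeft ℂ (NormedSpace.exp (c • μ)) (NormedSpace.exp (s • ρ)) := rfl
  have hR : NormedSpace.exp ((Complex.exp c * s) • ρ) * NormedSpace.exp (c • μ)
      = LinearMap.mulRight ℂ (NormedSpace.exp (c • μ))
          (NormedSpace.exp ((Complex.exp c * s) • ρ)) := rfl
  rw [hL, hR, aux_map_exp, aux_map_exp]
  refine tsum_congr fun n => ?_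
  simp only [LinearMap.mulLeft_apply, LinearMap.mulRight_apply, smul_pow,
    mul_smul_comm, smul_mul_assoc, aux_conj_pow μ ρ h3 c n, smul_smul, mul_pow]
  congr 1
  ring

end Aux

/-- Let `B` be a nondegenerate bilinear form on a finite-dimensional complex vector space,
`μ` skew-adjoint and diagonalizable, `ρ` self-adjoint and nilpotent, with `[μ, ρ] = ρ`.
Then `B(e^{-(w+πi)μ} e^{(w+πi)ρ} α, e^{-wμ} e^{wρ} β) = B(e^{πiρ} α, e^{πiμ} β)` for all
`w ∈ ℂ`; in particular the left-hand side is independent of `w`. -/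
theorem stmt12 (V : Type*) [NormedAddCommGroup V] [NormedSpace ℂ V] [FiniteDimensional ℂ V]
    (B : V →ₗ[ℂ] V →ₗ[ℂ] ℂ)
    (hBnd₁ : ∀ v : V, (∀ u : V, B u v = 0) → v = 0)
    (hBnd₂ : ∀ u : V, (∀ v : V, B u v = 0) → u = 0)
    (μ ρ : V →L[ℂ] V)
    (h1 : ∀ u v : V, B (μ u) v + B u (μ v) = 0)
    (h2 : ∀ u v : V, B (ρ u) v = B u (ρ v))
    (h3 : μ * ρ - ρ * μ = ρ)
    (h4 : ⨆ c : ℂ, Module.End.eigenspace (μ : V →ₗ[ℂ] V) c = ⊤)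
    (h5 : IsNilpotent ρ) :
    ∀ (w : ℂ) (α β : V),
      B ((NormedSpace.exp (-((w + (Real.pi : ℂ) * Complex.I) • μ)) *
            NormedSpace.exp ((w + (Real.pi : ℂ) * Complex.I) • ρ)) α)
        ((NormedSpace.exp (-(w • μ)) * NormedSpace.exp (w • ρ)) β)
      = B ((NormedSpace.exp (((Real.pi : ℂ) * Complex.I) • ρ)) α)
          ((NormedSpace.exp (((Real.pi : ℂ) * Complex.I) • μ)) β) := by
  intro w α β
  set P : ℂ := (Real.pi : ℂ) * Complex.I with hP
  -- adjointness of scalar multiples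
  have hμadj : ∀ (c : ℂ) (u v : V), B ((-(c • μ)) u) v = B u ((c • μ) v) := by
    intro c u v
    have h1' : B (μ u) v = -B u (μ v) := eq_neg_of_add_eq_zero_left (h1 u v)
    simp only [ContinuousLinearMap.neg_apply, ContinuousLinearMap.smul_apply, map_neg, map_smul,
      LinearMap.neg_apply, LinearMap.smul_apply, smul_eq_mul, h1']
    ring
  have hρadj : ∀ (c : ℂ) (u v : V), B ((c • ρ) u) v = B u ((c • ρ) v) := by
    intro c u v
    simp only [ContinuousLinearMap.smul_apply, map_smul, LinearMap.smul_apply, smul_eq_mul,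
      h2 u v]
  -- step 1: move the exponentials on the left across B
  rw [ContinuousLinearMap.mul_apply, ContinuousLinearMap.mul_apply,
    aux_adj B (-((w + P) • μ)) ((w + P) • μ) (hμadj (w + P)),
    aux_adj B ((w + P) • ρ) ((w + P) • ρ) (hρadj (w + P))]
  -- step 2: operator identity on the right-hand argument
  have hop : NormedSpace.exp ((w + P) • ρ) *
      (NormedSpace.exp ((w + P) • μ) *
        (NormedSpace.exp (-(w • μ)) * NormedSpace.exp (w • ρ)))
      = NormedSpace.exp (P • ρ) * NormedSpace.exp (P • μ) := by
    have hc1 : Commute ((w + P) • μ) (-(w • μ)) :=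
      (((Commute.refl μ).smul_left (w + P)).smul_right w).neg_right
    have e1 : NormedSpace.exp ((w + P) • μ) * NormedSpace.exp (-(w • μ))
        = NormedSpace.exp (P • μ) := by
      rw [← aux_exp_add hc1]
      congr 1
      rw [add_smul]
      abel
    have e2 : NormedSpace.exp (P • μ) * NormedSpace.exp (w • ρ)
        = NormedSpace.exp ((-w) • ρ) * NormedSpace.exp (P • μ) := by
      have := aux_comm_exp μ ρ h3 P w
      rwa [hP, Complex.exp_pi_mul_I, neg_one_mul, ← hP] at this
    have hc2 : Commute ((w + P) • ρ) ((-w) • ρ) :=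
      ((Commute.refl ρ).smul_left (w + P)).smul_right (-w)
    have e3 : NormedSpace.exp ((w + P) • ρ) * NormedSpace.exp ((-w) • ρ)
        = NormedSpace.exp (P • ρ) := by
      rw [← aux_exp_add hc2]
      congr 1
      rw [add_smul, neg_smul]
      abel
    calc NormedSpace.exp ((w + P) • ρ) *
        (NormedSpace.exp ((w + P) • μ) *
          (NormedSpace.exp (-(w • μ)) * NormedSpace.exp (w • ρ)))
        = NormedSpace.exp ((w + P) • ρ) *
            (NormedSpace.exp ((w + P) • μ) * NormedSpace.exp (-(w • μ)) *
              NormedSpace.exp (w • ρ)) := by rw [mul_assoc]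
      _ = NormedSpace.exp ((w + P) • ρ) *
            (NormedSpace.exp (P • μ) * NormedSpace.exp (w • ρ)) := by rw [e1]
      _ = NormedSpace.exp ((w + P) • ρ) *
            (NormedSpace.exp ((-w) • ρ) * NormedSpace.exp (P • μ)) := by rw [e2]
      _ = NormedSpace.exp ((w + P) • ρ) * NormedSpace.exp ((-w) • ρ) *
            NormedSpace.exp (P • μ) := by rw [mul_assoc]
      _ = NormedSpace.exp (P • ρ) * NormedSpace.exp (P • μ) := by rw [e3]
  have happ : NormedSpace.exp ((w + P) • ρ)
        (NormedSpace.exp ((w + P) • μ)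
          (NormedSpace.exp (-(w • μ)) (NormedSpace.exp (w • ρ) β)))
      = NormedSpace.exp (P • ρ) (NormedSpace.exp (P • μ) β) := by
    have := congrArg (fun C : V →L[ℂ] V => C β) hop
    simpa only [ContinuousLinearMap.mul_apply] using this
  rw [happ, ← aux_adj B (P • ρ) (P • ρ) (hρadj P)]
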